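/- For every integer k ≥ 1 and every real number η, the derivative with respect to ξ, evaluated at ξ = 0, of the function ξ ↦ Im((cosh(ξ + iη))^k) + W_k(ξ,η) is equal to 0; that is, the sum of the explicit harmonic function W_k and the function Ψ_k(ξ,η) = Im((cosh(ξ+iη))^k) satisfies a homogeneous Neumann condition on the line ξ = 0. -/

import Mathlib

open Finset

/-- The profile `W_k` in elliptic coordinates:
`W_k(ξ,η) = 2^{1-k} · ∑_{j=0}^{⌊(k-1)/2⌋} C(k,j)·exp(−(k−2j)ξ)·sin((k−2j)η)`. -/
noncomputable def Wk (k : ℕ) (ξ η : ℝ) : ℝ :=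
  (2 : ℝ) ^ (1 - (k : ℤ)) *
    ∑ j ∈ Finset.range ((k - 1) / 2 + 1),
      (Nat.choose k j : ℝ) * Real.exp (-(((k : ℝ) - 2 * j)) * ξ) *
        Real.sin (((k : ℝ) - 2 * j) * η)

lemma cosh_pow_expand (k : ℕ) (z : ℂ) :
    Complex.cosh z ^ k =
      (((2:ℝ) ^ (-(k:ℤ)) : ℝ) : ℂ) * ∑ j ∈ Finset.range (k+1),
        (k.choose j : ℂ) * Complex.exp ((2*(j:ℂ) - k) * z) := by
  have hc : Complex.cosh z = (Complex.exp z + Complex.exp (-z)) / 2 := rfl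
  have h2 : (((2:ℝ) ^ (-(k:ℤ)) : ℝ) : ℂ) = ((2:ℂ)^k)⁻¹ := by
    push_cast
    simp [zpow_neg]
  rw [hc, div_pow, add_pow, Finset.sum_div, h2, Finset.mul_sum]
  refine Finset.sum_congr rfl fun j hj => ?_
  have hjk : j ≤ k := Nat.lt_succ_iff.mp (Finset.mem_range.mp hj)
  rw [← Complex.exp_nat_mul, ← Complex.exp_nat_mul, ← Complex.exp_add,
    div_eq_inv_mul]
  have harg : (j:ℂ) * z + ((k - j : ℕ) : ℂ) * (-z) = (2*(j:ℂ) - k) * z := by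
    rw [Nat.cast_sub hjk]; ring
  rw [harg]
  ring

lemma sum_reflect_half (k : ℕ) (hk : 1 ≤ k) (g : ℕ → ℝ)
    (hsym : ∀ j ≤ k, g (k - j) = g j)
    (hmid : ∀ j, 2*j = k → g j = 0) :
    ∑ j ∈ Finset.range (k+1), g j = 2 * ∑ j ∈ Finset.range ((k-1)/2 + 1), g j := by
  set h := (k-1)/2 with hh
  have h1 : h + 1 ≤ k + 1 := by omega
  have h2 : h + 1 ≤ k - h := by omega
  rw [Finset.range_eq_Ico, ← Finset.sum_Ico_consecutive _ (Nat.zero_le (h+1)) h1]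
  have hrefl : ∑ j ∈ Finset.Ico (h+1) (k+1), g j = ∑ j ∈ Finset.Ico 0 (k-h), g j := by
    have := Finset.sum_Ico_reflect g 0 (n := k) (m := k - h) (by omega)
    have e1 : k + 1 - (k - h) = h + 1 := by omega
    have e2 : k + 1 - 0 = k + 1 := by omega
    rw [e1, e2] at this
    rw [← this]
    refine Finset.sum_congr rfl fun j hj => ?_
    have hj' : j ≤ k := by
      have := (Finset.mem_Ico.mp hj).2; omega
    exact hsym j hj'
  rw [hrefl, ← Finset.sum_Ico_consecutive _ (Nat.zero_le (h+1)) h2]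
  have hz : ∑ j ∈ Finset.Ico (h+1) (k-h), g j = 0 := by
    refine Finset.sum_eq_zero fun j hj => ?_
    have := Finset.mem_Ico.mp hj
    exact hmid j (by omega)
  rw [hz]
  rw [Finset.range_eq_Ico]
  ring

theorem neumann_at_zero (k : ℕ) (hk : 1 ≤ k) (η : ℝ) :
    deriv (fun ξ : ℝ => ((Complex.cosh ((ξ : ℂ) + Complex.I * (η : ℂ))) ^ k).im + Wk k ξ η) 0
      = 0 := by
  set m : ℕ → ℝ := fun j => 2*j - k with hm
  have key : (fun ξ : ℝ => ((Complex.cosh ((ξ : ℂ) + Complex.I * (η : ℂ))) ^ k).im + Wk k ξ η)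
      = fun ξ : ℝ => ((2:ℝ) ^ (-(k:ℤ)) *
          ∑ j ∈ Finset.range (k+1),
            (k.choose j : ℝ) * Real.exp (m j * ξ) * Real.sin (m j * η)) +
        ((2 : ℝ) ^ (1 - (k : ℤ)) *
          ∑ j ∈ Finset.range ((k - 1) / 2 + 1),
            (Nat.choose k j : ℝ) * Real.exp (m j * ξ) *
              Real.sin (((k : ℝ) - 2 * j) * η)) := by
    funext ξ
    congr 1
    · rw [cosh_pow_expand, Complex.im_ofReal_mul, Complex.im_sum]
      congr 1
      refine Finset.sum_congr rfl fun j _ => ?_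
      have harg : (2*(j:ℂ) - k) * ((ξ:ℂ) + Complex.I * η)
          = ((m j * ξ : ℝ) : ℂ) + ((m j * η : ℝ) : ℂ) * Complex.I := by
        simp only [hm]; push_cast; ring
      rw [harg]
      simp [Complex.exp_im, Complex.exp_re, mul_comm, mul_assoc]
    · rw [Wk]
      congr 1
      refine Finset.sum_congr rfl fun j _ => ?_
      have : -(((k : ℝ) - 2 * j)) = m j := by simp [hm]
      rw [this]
  rw [key]
  have hexp : ∀ c : ℝ, HasDerivAt (fun ξ : ℝ => Real.exp (c * ξ)) c 0 := by
    intro c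
    have h1 : HasDerivAt (fun ξ : ℝ => c * ξ) c 0 := by
      simpa using (hasDerivAt_id (0:ℝ)).const_mul c
    have := (Real.hasDerivAt_exp (c * 0)).comp 0 h1
    simpa [Function.comp_def] using this
  have hterm : ∀ (j : ℕ) (s : ℝ), HasDerivAt
      (fun ξ : ℝ => (k.choose j : ℝ) * Real.exp (m j * ξ) * s)
      ((k.choose j : ℝ) * m j * s) 0 := by
    intro j s
    simpa [mul_assoc] using (((hexp (m j)).const_mul ((k.choose j : ℝ))).mul_const s)
  have hD : HasDerivAt (fun ξ : ℝ => ((2:ℝ) ^ (-(k:ℤ)) *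
          ∑ j ∈ Finset.range (k+1),
            (k.choose j : ℝ) * Real.exp (m j * ξ) * Real.sin (m j * η)) +
        ((2 : ℝ) ^ (1 - (k : ℤ)) *
          ∑ j ∈ Finset.range ((k - 1) / 2 + 1),
            (Nat.choose k j : ℝ) * Real.exp (m j * ξ) *
              Real.sin (((k : ℝ) - 2 * j) * η)))
      ((2:ℝ) ^ (-(k:ℤ)) * ∑ j ∈ Finset.range (k+1),
            (k.choose j : ℝ) * m j * Real.sin (m j * η) +
       (2 : ℝ) ^ (1 - (k : ℤ)) * ∑ j ∈ Finset.range ((k - 1) / 2 + 1),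
            (k.choose j : ℝ) * m j * Real.sin (((k : ℝ) - 2 * j) * η)) 0 := by
    exact ((HasDerivAt.fun_sum fun j _ => hterm j (Real.sin (m j * η))).const_mul _).add
      (((HasDerivAt.fun_sum fun j _ => hterm j (Real.sin (((k : ℝ) - 2 * j) * η))).const_mul _))
  rw [hD.deriv]
  -- now the algebraic identity
  set g : ℕ → ℝ := fun j => (k.choose j : ℝ) * m j * Real.sin (m j * η) with hg
  have hsin : ∀ j, (k.choose j : ℝ) * m j * Real.sin (((k : ℝ) - 2 * j) * η) = - g j := by
    intro j
    have h1 : ((k : ℝ) - 2 * j) * η = -(m j * η) := by simp [hm]; ring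
    rw [hg, h1, Real.sin_neg]
    ring
  have hrw : ∑ j ∈ Finset.range ((k - 1) / 2 + 1),
      (k.choose j : ℝ) * m j * Real.sin (((k : ℝ) - 2 * j) * η)
      = - ∑ j ∈ Finset.range ((k - 1) / 2 + 1), g j := by
    rw [← Finset.sum_neg_distrib]
    exact Finset.sum_congr rfl fun j _ => hsin j
  have hid : ∑ j ∈ Finset.range (k+1), g j
      = 2 * ∑ j ∈ Finset.range ((k-1)/2 + 1), g j := by
    refine sum_reflect_half k hk g (fun j hj => ?_) (fun j hj => ?_)
    · have hmj : m (k - j) = - m j := by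
        simp only [hm]; rw [Nat.cast_sub hj]; ring
      rw [hg]
      simp only [hmj, Nat.choose_symm hj, neg_mul, Real.sin_neg]
      ring
    · have : m j = 0 := by
        simp only [hm]
        have : (k : ℝ) = 2 * j := by exact_mod_cast hj.symm
        rw [this]; ring
      simp [hg, this]
  rw [hrw, hid]
  have h2 : (2:ℝ) ^ (1 - (k:ℤ)) = 2 * (2:ℝ) ^ (-(k:ℤ)) := by
    rw [show (1 - (k:ℤ)) = 1 + (-(k:ℤ)) by ring, zpow_add₀ (by norm_num : (2:ℝ) ≠ 0)]
    norm_num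
  rw [h2]
  ring
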